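/- Let A and B be unital prime complex *-algebras whose centers equal ℂ·1 and which each contain a nontrivial projection, and let Φ : A → B be a bijective mapping satisfying Φ(xy − yx*) = Φ(x)Φ(y) − Φ(y)Φ(x)* for all x, y ∈ A. Then Φ(ℝ·1_A) = ℝ·1_B, the map Φ preserves self-adjoint elements in both directions (for a ∈ A, a = a* if and only if Φ(a) = Φ(a)*), and Φ(ℂ·1_A) = ℂ·1_B. -/
import Mathlib

private lemma smul_cancel' {M : Type*} [AddCommGroup M] [Module ℂ M] {c : ℂ} (hc : c ≠ 0)
    {v w : M} (hvw : c • v = c • w) : v = w := by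
  have := congrArg (fun m => c⁻¹ • m) hvw
  simpa [smul_smul, inv_mul_cancel₀ hc] using this

private lemma real_char {A : Type*} [Ring A] [Algebra ℂ A] [StarRing A] [StarModule ℂ A]
    (h1 : (1 : A) ≠ 0)
    (hcenter : ∀ a : A, (∀ x : A, a * x = x * a) → ∃ c : ℂ, a = c • (1 : A)) (a : A) :
    (∃ t : ℝ, a = (t : ℂ) • (1 : A)) ↔ ∀ y : A, a * y - y * star a = 0 := by
  constructor
  · rintro ⟨t, rfl⟩ y
    simp [star_smul, Complex.star_def, Complex.conj_ofReal, mul_smul_comm, smul_mul_assoc]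
  · intro hy
    have hsa : star a = a := by
      have := hy 1
      simp only [mul_one, one_mul, sub_eq_zero] at this
      exact this.symm
    have hc : ∀ x : A, a * x = x * a := by
      intro x
      have := hy x
      rw [hsa, sub_eq_zero] at this
      exact this
    obtain ⟨c, rfl⟩ := hcenter a hc
    have : (starRingEnd ℂ) c • (1 : A) = c • (1 : A) := by
      conv_rhs => rw [← hsa]
      simp [star_smul, Complex.star_def]
    have hcc : (starRingEnd ℂ) c = c := by
      by_contra hne
      have h0 : ((starRingEnd ℂ) c - c) • (1 : A) = 0 := by
        rw [sub_smul, this, sub_self]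
      rcases smul_eq_zero.mp h0 with h' | h'
      · exact hne (by linear_combination h')
      · exact h1 h'
    refine ⟨c.re, ?_⟩
    congr 1
    exact (Complex.conj_eq_iff_re.mp hcc).symm

private lemma complex_char {A : Type*} [Ring A] [Algebra ℂ A] [StarRing A] [StarModule ℂ A]
    (hcenter : ∀ a : A, (∀ x : A, a * x = x * a) → ∃ c : ℂ, a = c • (1 : A)) (a : A) :
    (∃ c : ℂ, a = c • (1 : A)) ↔ ∀ y : A, star y = y → y * a - a * star y = 0 := by
  constructor
  · rintro ⟨c, rfl⟩ y hy
    rw [hy]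
    simp [mul_smul_comm, smul_mul_assoc]
  · intro hy
    have key : ∀ y : A, star y = y → y * a = a * y := by
      intro y h'
      have := hy y h'
      rw [h', sub_eq_zero] at this
      exact this
    have hc : ∀ x : A, a * x = x * a := by
      intro x
      have e1 : (x + star x) * a = a * (x + star x) :=
        key _ (by simp [star_add, add_comm])
      have hk : star (Complex.I • (x - star x)) = Complex.I • (x - star x) := by
        simp [star_smul, Complex.star_def, Complex.conj_I, star_sub, neg_smul, smul_sub]
        abel
      have e2' : (Complex.I • (x - star x)) * a = a * (Complex.I • (x - star x)) := key _ hk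
      have e2 : (x - star x) * a = a * (x - star x) := by
        apply smul_cancel' Complex.I_ne_zero
        simpa [smul_mul_assoc, mul_smul_comm] using e2'
      have e3 : x * a + x * a = a * x + a * x := by
        calc x * a + x * a = (x + star x) * a + (x - star x) * a := by noncomm_ring
        _ = a * (x + star x) + a * (x - star x) := by rw [e1, e2]
        _ = a * x + a * x := by noncomm_ring
      have e4 : (2 : ℂ) • (x * a) = (2 : ℂ) • (a * x) := by
        rw [two_smul, two_smul]; exact e3
      exact (smul_cancel' two_ne_zero e4).symm
    exact hcenter a hc

/-- Lemma 2.5': Φ(ℝ·1_A) = ℝ·1_B, Φ preserves self-adjoint elements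
in both directions, and Φ(ℂ·1_A) = ℂ·1_B. -/
theorem stmt_12 {A B : Type*}
    [Ring A] [Algebra ℂ A] [StarRing A] [StarModule ℂ A]
    [Ring B] [Algebra ℂ B] [StarRing B] [StarModule ℂ B]
    (hAprime : ∀ a b : A, (∀ x : A, a * x * b = 0) → a = 0 ∨ b = 0)
    (hBprime : ∀ a b : B, (∀ x : B, a * x * b = 0) → a = 0 ∨ b = 0)
    (hAcenter : ∀ a : A, (∀ x : A, a * x = x * a) → ∃ c : ℂ, a = c • (1 : A))
    (hBcenter : ∀ b : B, (∀ x : B, b * x = x * b) → ∃ c : ℂ, b = c • (1 : B))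
    (hAproj : ∃ p : A, p ≠ 0 ∧ p ≠ 1 ∧ star p = p ∧ p * p = p)
    (hBproj : ∃ q : B, q ≠ 0 ∧ q ≠ 1 ∧ star q = q ∧ q * q = q)
    (Φ : A → B) (hΦ : Function.Bijective Φ)
    (h : ∀ x y : A, Φ (x * y - y * star x) = Φ x * Φ y - Φ y * star (Φ x)) :
    Φ '' {a : A | ∃ t : ℝ, a = (t : ℂ) • (1 : A)} =
      {b : B | ∃ t : ℝ, b = (t : ℂ) • (1 : B)} ∧
    (∀ a : A, star a = a ↔ star (Φ a) = Φ a) ∧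
    Φ '' {a : A | ∃ c : ℂ, a = c • (1 : A)} = {b : B | ∃ c : ℂ, b = c • (1 : B)} := by
  obtain ⟨Φinj, Φsurj⟩ := hΦ
  -- the algebras are nontrivial
  obtain ⟨p, hp0, -, -, -⟩ := hAproj
  have h1A : (1 : A) ≠ 0 := fun h1 => hp0 (by rw [← mul_one p, h1, mul_zero])
  obtain ⟨q, hq0, -, -, -⟩ := hBproj
  have h1B : (1 : B) ≠ 0 := fun h1 => hq0 (by rw [← mul_one q, h1, mul_zero])
  -- Φ 0 = 0
  have hΦ0 : Φ 0 = 0 := by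
    obtain ⟨z, hz⟩ := Φsurj 0
    have h2 : ∀ y : A, Φ (z * y - y * star z) = 0 := by
      intro y; rw [h, hz]; simp
    have h3 : ∀ y : A, z * y - y * star z = z := fun y => Φinj (by rw [h2, hz])
    have hz0 : z = 0 := by have := h3 0; simpa using this.symm
    rw [hz0] at hz; exact hz
  -- transfer of the real characterization
  have keyR : ∀ a : A, (∃ t : ℝ, a = (t : ℂ) • (1 : A)) ↔
      (∃ t : ℝ, Φ a = (t : ℂ) • (1 : B)) := by
    intro a
    rw [real_char h1A hAcenter, real_char h1B hBcenter]
    constructor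
    · intro ha b
      obtain ⟨y, rfl⟩ := Φsurj b
      have := h a y
      rw [ha y, hΦ0] at this
      exact this.symm
    · intro hb y
      apply Φinj
      rw [hΦ0, h, hb (Φ y)]
  have claim1 : Φ '' {a : A | ∃ t : ℝ, a = (t : ℂ) • (1 : A)} =
      {b : B | ∃ t : ℝ, b = (t : ℂ) • (1 : B)} := by
    ext b
    constructor
    · rintro ⟨a, ha, rfl⟩
      exact (keyR a).mp ha
    · intro hb
      obtain ⟨a, rfl⟩ := Φsurj b
      exact ⟨a, (keyR a).mpr hb, rfl⟩
  -- find s with Φ (s•1) = 1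
  have h1mem : (1 : B) ∈ Φ '' {a : A | ∃ t : ℝ, a = (t : ℂ) • (1 : A)} := by
    rw [claim1]
    exact ⟨1, by simp⟩
  obtain ⟨a₀, ⟨s, rfl⟩, hs1⟩ := h1mem
  have hs0 : (s : ℂ) ≠ 0 := by
    intro hs
    rw [hs, zero_smul] at hs1
    rw [hΦ0] at hs1
    exact h1B hs1.symm
  have key2 : ∀ x : A, Φ ((s : ℂ) • (x - star x)) = Φ x - star (Φ x) := by
    intro x
    have := h x ((s : ℂ) • (1 : A))
    rw [hs1] at this
    simpa [mul_smul_comm, smul_mul_assoc, smul_sub] using this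
  have claim2 : ∀ a : A, star a = a ↔ star (Φ a) = Φ a := by
    intro a
    constructor
    · intro ha
      have := key2 a
      rw [ha, sub_self, smul_zero, hΦ0] at this
      rw [← sub_eq_zero, ← neg_sub, this.symm, neg_zero]
    · intro hb
      have := key2 a
      rw [hb, sub_self] at this
      have h0 : (s : ℂ) • (a - star a) = 0 := by
        apply Φinj; rw [this, hΦ0]
      have := smul_cancel' hs0 (w := (0 : A)) (by rw [h0, smul_zero])
      rw [sub_eq_zero] at this
      exact this.symm
  -- transfer of the complex characterization
  have keyC : ∀ a : A, (∃ c : ℂ, a = c • (1 : A)) ↔ (∃ c : ℂ, Φ a = c • (1 : B)) := by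
    intro a
    rw [complex_char hAcenter, complex_char hBcenter]
    constructor
    · intro ha b hb
      obtain ⟨y, rfl⟩ := Φsurj b
      have hy : star y = y := (claim2 y).mpr hb
      have := h y a
      rw [ha y hy, hΦ0] at this
      exact this.symm
    · intro hb y hy
      apply Φinj
      rw [hΦ0, h, hb (Φ y) ((claim2 y).mp hy)]
  refine ⟨claim1, claim2, ?_⟩
  ext b
  constructor
  · rintro ⟨a, ha, rfl⟩
    exact (keyC a).mp ha
  · intro hb
    obtain ⟨a, rfl⟩ := Φsurj b
    exact ⟨a, (keyC a).mpr hb, rfl⟩
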